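/- Let n ≥ 2 and let ℓ : ℝ → [0,∞) be measurable such that F_ℓ is a set of finite perimeter and finite volume in ℝⁿ. Fix z̄ ∈ ℝ and w ∈ ℝ^{n-1} with |w| > r_ℓ^∨(z̄). Then (z̄,w) is a point of density 0 of F_ℓ, i.e. lim_{ρ→0⁺} ℋ^n(F_ℓ ∩ B_ρ((z̄,w)))/(ω_n ρⁿ) = 0. -/

import Mathlib

open MeasureTheory Metric Set Filter
open scoped ENNReal NNReal Topology RealInnerProductSpace symmDiff

noncomputable section

namespace Schwarz

/-- The point `(z, w) ∈ ℝ × ℝ^m ≅ ℝ^(m+1)`. -/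
def mk' {m : ℕ} (z : ℝ) (w : EuclideanSpace ℝ (Fin m)) : EuclideanSpace ℝ (Fin (m + 1)) :=
  (WithLp.equiv 2 (Fin (m + 1) → ℝ)).symm (Fin.cons z ((WithLp.equiv 2 (Fin m → ℝ)) w))

/-- The `w`-component of a point of `ℝ^(m+1) ≅ ℝ × ℝ^m`. -/
def tailv {m : ℕ} (x : EuclideanSpace ℝ (Fin (m + 1))) : EuclideanSpace ℝ (Fin m) :=
  (WithLp.equiv 2 (Fin m → ℝ)).symm (fun i => x i.succ)

/-- The slice of a subset of `ℝ^(m+1)` at height `z`. -/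
def slice {m : ℕ} (A : Set (EuclideanSpace ℝ (Fin (m + 1)))) (z : ℝ) :
    Set (EuclideanSpace ℝ (Fin m)) := {w | mk' z w ∈ A}

/-- `ω_d`, the Lebesgue measure of the unit ball of `ℝ^d`. -/
def ballVol (d : ℕ) : ℝ≥0∞ := volume (ball (0 : EuclideanSpace ℝ (Fin d)) 1)

/-- `A ⊆ ℝ^(m+1)` is `ℓ`-distributed: a.e. slice has measure `ℓ z`. -/
def IsDistributed (m : ℕ) (ℓ : ℝ → ℝ) (A : Set (EuclideanSpace ℝ (Fin (m + 1)))) : Prop :=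
  ∀ᵐ z ∂(volume : Measure ℝ), volume (slice A z) = ENNReal.ofReal (ℓ z)

/-- The radius `r_ℓ(z) = (ℓ z / ω_m)^(1/m)`. -/
def rad (m : ℕ) (ℓ : ℝ → ℝ) (z : ℝ) : ℝ := (ℓ z / (ballVol m).toReal) ^ ((1 : ℝ) / m)

/-- The Schwarz symmetric set `F_ℓ`. -/
def F (m : ℕ) (ℓ : ℝ → ℝ) : Set (EuclideanSpace ℝ (Fin (m + 1))) :=
  {x | ‖tailv x‖ < rad m ℓ (x 0)}

/-- The density of `A` at `x` equals `s` (balls of volume `ω_d ρ^d`). -/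
def DensAt {d : ℕ} (A : Set (EuclideanSpace ℝ (Fin d))) (x : EuclideanSpace ℝ (Fin d))
    (s : ℝ≥0∞) : Prop :=
  Tendsto (fun ρ : ℝ => volume (A ∩ ball x ρ) / (ballVol d * ENNReal.ofReal (ρ ^ d)))
    (𝓝[>] 0) (𝓝 s)

/-- The essential (measure-theoretic) boundary: where the density is neither 0 nor 1.
By Federer's theorem it agrees with the reduced boundary up to `ℋ^(d-1)`-null sets. -/
def essBoundary {d : ℕ} (A : Set (EuclideanSpace ℝ (Fin d))) :
    Set (EuclideanSpace ℝ (Fin d)) :=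
  {x | ¬ DensAt A x 0 ∧ ¬ DensAt A x 1}

/-- Relative perimeter `P(A; G) = ℋ^(d-1)(G ∩ ∂*A)`. -/
def perim {d : ℕ} (A G : Set (EuclideanSpace ℝ (Fin d))) : ℝ≥0∞ :=
  μH[(d : ℝ) - 1] (G ∩ essBoundary A)

/-- A set of finite perimeter (via Federer's criterion). -/
def HasFinPerim {d : ℕ} (A : Set (EuclideanSpace ℝ (Fin d))) : Prop :=
  MeasurableSet A ∧ perim A univ < ⊤

/-- Translation of a subset of `ℝ^(m+1)` by the horizontal vector `(0, τ)`. -/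
def vtrans {m : ℕ} (τ : EuclideanSpace ℝ (Fin m)) (A : Set (EuclideanSpace ℝ (Fin (m + 1)))) :
    Set (EuclideanSpace ℝ (Fin (m + 1))) := (fun x => x + mk' 0 τ) '' A

/-- One-dimensional density of `A ⊆ ℝ` at `x` equals `s`. -/
def DensAtR (A : Set ℝ) (x : ℝ) (s : ℝ≥0∞) : Prop :=
  Tendsto (fun ρ : ℝ => volume (A ∩ ball x ρ) / ENNReal.ofReal (2 * ρ)) (𝓝[>] 0) (𝓝 s)

/-- Approximate lower limit `g^∧(x)`. -/
def approxLower (g : ℝ → ℝ) (x : ℝ) : EReal :=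
  sSup ((fun s : ℝ => (s : EReal)) '' {s : ℝ | DensAtR {y | g y < s} x 0})

/-- Approximate upper limit `g^∨(x)`. -/
def approxUpper (g : ℝ → ℝ) (x : ℝ) : EReal :=
  sInf ((fun s : ℝ => (s : EReal)) '' {s : ℝ | DensAtR {y | s < g y} x 0})

/-- Divergence of a vector field on `ℝ^d`. -/
def divg {d : ℕ} (T : EuclideanSpace ℝ (Fin d) → EuclideanSpace ℝ (Fin d))
    (x : EuclideanSpace ℝ (Fin d)) : ℝ :=
  ∑ i, fderiv ℝ T x (EuclideanSpace.single i 1) i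

/-- `ν` is a measure-theoretic outer unit normal of `A`: the generalised Gauss–Green
formula holds on the (essential = reduced, up to `ℋ^(d-1)`-null sets) boundary. -/
def IsGGNormal {d : ℕ} (A : Set (EuclideanSpace ℝ (Fin d)))
    (ν : EuclideanSpace ℝ (Fin d) → EuclideanSpace ℝ (Fin d)) : Prop :=
  (∀ x ∈ essBoundary A, ‖ν x‖ = 1) ∧
  ∀ T : EuclideanSpace ℝ (Fin d) → EuclideanSpace ℝ (Fin d),
    ContDiff ℝ 1 T → HasCompactSupport T →
      ∫ x in A, divg T x = ∫ x in essBoundary A, ⟪T x, ν x⟫ ∂(μH[(d : ℝ) - 1])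

/-- `g ∈ W^{1,1}(Ω)`: `g` is integrable on `Ω` with integrable distributional derivative. -/
def MemW11 (g : ℝ → ℝ) (Ω : Set ℝ) : Prop :=
  IntegrableOn g Ω ∧ ∃ g' : ℝ → ℝ, IntegrableOn g' Ω ∧
    ∀ φ : ℝ → ℝ, ContDiff ℝ 1 φ → HasCompactSupport φ → tsupport φ ⊆ Ω →
      ∫ z in Ω, g z * deriv φ z = - ∫ z in Ω, g' z * φ z

/-- Rigidity for the perimeter inequality under Schwarz symmetrisation: every equality
case is a horizontal translate of `F_ℓ`. -/
def Rigidity (m : ℕ) (ℓ : ℝ → ℝ) : Prop :=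
  ∀ A : Set (EuclideanSpace ℝ (Fin (m + 1))), MeasurableSet A → IsDistributed m ℓ A →
    perim A univ = perim (F m ℓ) univ →
    ∃ τ : EuclideanSpace ℝ (Fin m), volume (A ∆ vtrans τ (F m ℓ)) = 0

/-- A decomposition `Dℓ = g dx + ε dσ` of the distributional derivative of `ℓ`:
`g = ∇ℓ` is the absolutely continuous density, `σ = |D^s ℓ|` and `ε` the sign of the
singular part. -/
def IsDerivDecomp (ℓ g ε : ℝ → ℝ) (σ : Measure ℝ) : Prop :=
  Integrable g ∧ σ ⟂ₘ (volume : Measure ℝ) ∧ IsFiniteMeasure σ ∧ (∀ᵐ x ∂σ, |ε x| = 1) ∧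
    ∀ φ : ℝ → ℝ, ContDiff ℝ 1 φ → HasCompactSupport φ →
      ∫ x, ℓ x * deriv φ x = -(∫ x, φ x * g x) - ∫ x, φ x * ε x ∂σ

/-- Bounded variation on `ℝ` via the variational definition. -/
def HasBddVariation (g : ℝ → ℝ) : Prop :=
  ∃ C : ℝ, ∀ T : ℝ → ℝ, ContDiff ℝ 1 T → HasCompactSupport T → (∀ x, |T x| ≤ 1) →
    ∫ x, g x * deriv T x ≤ C



section Aux

lemma tailv_mk' {m : ℕ} (z : ℝ) (w : EuclideanSpace ℝ (Fin m)) : tailv (mk' z w) = w := by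
  ext i; simp [tailv, mk']

lemma norm_tailv_le {m : ℕ} (x : EuclideanSpace ℝ (Fin (m + 1))) : ‖tailv x‖ ≤ ‖x‖ := by
  rw [EuclideanSpace.norm_eq, EuclideanSpace.norm_eq]
  apply Real.sqrt_le_sqrt
  rw [Fin.sum_univ_succ]
  have h : ∀ i : Fin m, ‖tailv x i‖ = ‖x i.succ‖ := fun i => rfl
  simp_rw [h]
  exact le_add_of_nonneg_left (by positivity)

lemma abs_head_le {m : ℕ} (x : EuclideanSpace ℝ (Fin (m + 1))) : |x 0| ≤ ‖x‖ := by
  have h1 : |x 0| = Real.sqrt (‖x 0‖ ^ 2) := by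
    rw [Real.norm_eq_abs, Real.sqrt_sq_eq_abs, abs_abs]
  rw [h1, EuclideanSpace.norm_eq]
  apply Real.sqrt_le_sqrt
  rw [Fin.sum_univ_succ]
  exact le_add_of_nonneg_right (by positivity)

lemma measurePreserving_headTail {m : ℕ} :
    MeasurePreserving (fun x : EuclideanSpace ℝ (Fin (m + 1)) => (x 0, tailv x))
      volume ((volume : Measure ℝ).prod (volume : Measure (EuclideanSpace ℝ (Fin m)))) := by
  have h1 := EuclideanSpace.volume_preserving_symm_measurableEquiv_toLp (ι := Fin (m + 1))
  have h2 := MeasureTheory.volume_preserving_piFinSuccAbove (fun _ : Fin (m + 1) => ℝ) 0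
  have h3 := (EuclideanSpace.volume_preserving_symm_measurableEquiv_toLp (ι := Fin m)).symm _
  have h := ((MeasurePreserving.id (volume : Measure ℝ)).prod h3).comp (h2.comp h1)
  have heq : (fun x : EuclideanSpace ℝ (Fin (m + 1)) => (x 0, tailv x)) =
      (Prod.map id ((MeasurableEquiv.toLp 2 (Fin m → ℝ)).symm.symm) ∘
        (MeasurableEquiv.piFinSuccAbove (fun _ : Fin (m + 1) => ℝ) 0) ∘
        ((MeasurableEquiv.toLp 2 (Fin (m + 1) → ℝ)).symm)) := by
    funext x
    simp [tailv, MeasurableEquiv.piFinSuccAbove, MeasurableEquiv.toLp,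
      Fin.insertNthEquiv]
    exact ⟨rfl, rfl⟩
  rw [heq]
  exact h

lemma ratio_eq (m : ℕ) (A Bm c : ℝ≥0∞) (hA : A ≠ ⊤) (hBm : Bm ≠ ⊤) (hc0 : c ≠ 0)
    (hc : c ≠ ⊤) {ρ : ℝ} (hρ : 0 < ρ) :
    A * (ENNReal.ofReal (ρ ^ m) * Bm) / (c * ENNReal.ofReal (ρ ^ (m + 1)))
      = A / ENNReal.ofReal (2 * ρ) * (2 * Bm / c) := by
  have hρm : (0 : ℝ) < ρ ^ m := pow_pos hρ m
  have hρm1 : (0 : ℝ) < ρ ^ (m + 1) := pow_pos hρ _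
  have h2ρ : (0 : ℝ) < 2 * ρ := by linarith
  have hLne : A * (ENNReal.ofReal (ρ ^ m) * Bm) / (c * ENNReal.ofReal (ρ ^ (m + 1))) ≠ ⊤ :=
    (ENNReal.div_lt_top (ENNReal.mul_ne_top hA (ENNReal.mul_ne_top ENNReal.ofReal_ne_top hBm))
      (mul_ne_zero hc0 (ENNReal.ofReal_pos.mpr hρm1).ne')).ne
  have hRne : A / ENNReal.ofReal (2 * ρ) * (2 * Bm / c) ≠ ⊤ :=
    ENNReal.mul_ne_top (ENNReal.div_lt_top hA (ENNReal.ofReal_pos.mpr h2ρ).ne').ne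
      (ENNReal.div_lt_top (ENNReal.mul_ne_top (by simp) hBm) hc0).ne
  rw [← ENNReal.toReal_eq_toReal_iff' hLne hRne]
  simp only [ENNReal.toReal_div, ENNReal.toReal_mul, ENNReal.toReal_ofReal hρm.le,
    ENNReal.toReal_ofReal hρm1.le, ENNReal.toReal_ofReal h2ρ.le]
  have hc' : c.toReal ≠ 0 := ENNReal.toReal_ne_zero.mpr ⟨hc0, hc⟩
  have h2 : (2 : ℝ≥0∞).toReal = 2 := by simp
  rw [h2, pow_succ]
  field_simp

end Aux

/-- points with `|w| > r_ℓ^∨(zb)` have density 0 for `F_ℓ`. -/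
theorem densAt_zero (m : ℕ) (hm : 1 ≤ m)
    (ℓ : ℝ → ℝ) (hmeas : Measurable ℓ) (hpos : ∀ z, 0 ≤ ℓ z)
    (hper : HasFinPerim (F m ℓ)) (hvol : volume (F m ℓ) < ⊤)
    (zb : ℝ) (w : EuclideanSpace ℝ (Fin m))
    (hw : approxUpper (rad m ℓ) zb < ((‖w‖ : ℝ) : EReal)) :
    DensAt (F m ℓ) (mk' zb w) 0 := by
  classical
  unfold approxUpper at hw
  obtain ⟨e, ⟨s, hsZ, rfl⟩, hlt⟩ := sInf_lt_iff.mp hw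
  have hs : s < ‖w‖ := by
    have : (s : EReal) < (‖w‖ : ℝ) := hlt
    exact_mod_cast this
  set δ : ℝ := ‖w‖ - s with hδdef
  have hδ : 0 < δ := by simp [hδdef]; linarith
  set Z : Set ℝ := {y | s < rad m ℓ y} with hZdef
  have hradm : Measurable (rad m ℓ) := by unfold rad; fun_prop
  have hZmeas : MeasurableSet Z := measurableSet_lt measurable_const hradm
  have hZ : Tendsto (fun ρ : ℝ => volume (Z ∩ ball zb ρ) / ENNReal.ofReal (2 * ρ))
      (𝓝[>] 0) (𝓝 0) := hsZ
  haveI : Nontrivial (EuclideanSpace ℝ (Fin m)) := by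
    refine nontrivial_of_ne (EuclideanSpace.single (⟨0, hm⟩ : Fin m) (1 : ℝ)) 0 ?_
    intro h
    have := congrArg (fun v => v (⟨0, hm⟩ : Fin m)) h
    simp at this
  have hBm_ne : ballVol m ≠ ⊤ := measure_ball_lt_top.ne
  have hc0 : ballVol (m + 1) ≠ 0 := (measure_ball_pos volume 0 one_pos).ne'
  have hc : ballVol (m + 1) ≠ ⊤ := measure_ball_lt_top.ne
  set C : ℝ≥0∞ := 2 * ballVol m / ballVol (m + 1) with hCdef
  have hCne : C ≠ ⊤ := (ENNReal.div_lt_top (ENNReal.mul_ne_top (by simp) hBm_ne) hc0).ne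
  have hup : ∀ ρ ∈ Ioo (0 : ℝ) δ, volume (F m ℓ ∩ ball (mk' zb w) ρ)
      ≤ volume (Z ∩ ball zb ρ) * (ENNReal.ofReal (ρ ^ m) * ballVol m) := by
    intro ρ hρ
    have hincl : F m ℓ ∩ ball (mk' zb w) ρ ⊆
        (fun x : EuclideanSpace ℝ (Fin (m + 1)) => (x 0, tailv x)) ⁻¹'
          ((Z ∩ ball zb ρ) ×ˢ ball w ρ) := by
      rintro x' ⟨hxF, hxB⟩
      have hxF' : ‖tailv x'‖ < rad m ℓ (x' 0) := hxF
      have hd : ‖x' - mk' zb w‖ < ρ := by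
        rw [← dist_eq_norm]; exact mem_ball.mp hxB
      have key1 : |x' 0 - zb| < ρ := by
        have h := abs_head_le (x' - mk' zb w)
        have h0 : (x' - mk' zb w) 0 = x' 0 - zb := rfl
        rw [h0] at h
        linarith
      have key2 : ‖tailv x' - w‖ < ρ := by
        have h := norm_tailv_le (x' - mk' zb w)
        have h0 : tailv (x' - mk' zb w) = tailv x' - w := by
          have : tailv (x' - mk' zb w) = tailv x' - tailv (mk' zb w) := rfl
          rw [this, tailv_mk']
        rw [h0] at h
        linarith
      have hnt : s < ‖tailv x'‖ := by
        have h := abs_norm_sub_norm_le (tailv x') w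
        have := abs_le.mp (h.trans key2.le)
        have hρδ : ρ < ‖w‖ - s := hρ.2
        linarith [this.1]
      refine ⟨⟨lt_trans hnt hxF', ?_⟩, ?_⟩
      · rw [mem_ball, Real.dist_eq]; exact key1
      · rw [mem_ball, dist_eq_norm]; exact key2
    calc volume (F m ℓ ∩ ball (mk' zb w) ρ)
        ≤ volume ((fun x : EuclideanSpace ℝ (Fin (m + 1)) => (x 0, tailv x)) ⁻¹'
            ((Z ∩ ball zb ρ) ×ˢ ball w ρ)) := measure_mono hincl
      _ = volume (Z ∩ ball zb ρ) * volume (ball w ρ) := by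
          rw [measurePreserving_headTail.measure_preimage
            ((hZmeas.inter measurableSet_ball).prod measurableSet_ball).nullMeasurableSet,
            Measure.prod_prod]
      _ = volume (Z ∩ ball zb ρ) * (ENNReal.ofReal (ρ ^ m) * ballVol m) := by
          rw [Measure.addHaar_ball volume w hρ.1.le, finrank_euclideanSpace_fin]
          rfl
  have hlim : Tendsto (fun ρ : ℝ => volume (Z ∩ ball zb ρ) / ENNReal.ofReal (2 * ρ) * C)
      (𝓝[>] 0) (𝓝 0) := by
    have := ENNReal.Tendsto.mul_const hZ (Or.inr hCne)
    simpa using this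
  refine tendsto_of_tendsto_of_tendsto_of_le_of_le' tendsto_const_nhds hlim
    (Eventually.of_forall fun ρ => zero_le) ?_
  filter_upwards [Ioo_mem_nhdsGT_of_mem (⟨le_rfl, hδ⟩ : (0 : ℝ) ∈ Ico 0 δ)] with ρ hρ
  have hAne : volume (Z ∩ ball zb ρ) ≠ ⊤ :=
    ((measure_mono inter_subset_right).trans_lt measure_ball_lt_top).ne
  calc volume (F m ℓ ∩ ball (mk' zb w) ρ) / (ballVol (m + 1) * ENNReal.ofReal (ρ ^ (m + 1)))
      ≤ volume (Z ∩ ball zb ρ) * (ENNReal.ofReal (ρ ^ m) * ballVol m) /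
          (ballVol (m + 1) * ENNReal.ofReal (ρ ^ (m + 1))) :=
        ENNReal.div_le_div_right (hup ρ hρ) _
    _ = volume (Z ∩ ball zb ρ) / ENNReal.ofReal (2 * ρ) * C :=
        ratio_eq m _ _ _ hAne hBm_ne hc0 hc hρ.1


end Schwarz
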